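/- It holds that Z·(I − A_R)·Zᵀ·(Z·β_R) = Z·(I − A_R)·β_ll, and consequently, for every real α, Z·β_R = Z·(I − α·R·(I − A_R))·Zᵀ·(Z·β_R) + α·R·Z·(I − A_R)·β_ll (the large-R fixed-point equation (10) used in the modified iterative algorithm). -/
import Mathlib
open Matrix

theorem aux_ZZtZ {N q : ℕ} (Z : Matrix (Fin q) (Fin N) ℝ)
    (hZ2 : (Z * Zᵀ) * (Z * Zᵀ) = Z * Zᵀ) : Z * Zᵀ * Z = Z := by
  have hZ2' : Z * Zᵀ * Z * Zᵀ = Z * Zᵀ := by rw [Matrix.mul_assoc (Z * Zᵀ) Z Zᵀ]; exact hZ2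
  have h : (Z * Zᵀ * Z - Z) * (Z * Zᵀ * Z - Z)ᴴ = 0 := by
    have ht : (Z * Zᵀ * Z - Z)ᴴ = Zᵀ * Z * Zᵀ - Zᵀ := by
      simp [conjTranspose_sub, conjTranspose_mul,
        Matrix.conjTranspose_eq_transpose_of_trivial, Matrix.mul_assoc]
    rw [ht]
    simp only [Matrix.sub_mul, Matrix.mul_sub, ← Matrix.mul_assoc, hZ2']
    abel
  exact sub_eq_zero.mp (Matrix.self_mul_conjTranspose_eq_zero.mp h)

/-- the large-`R` fixed-point equation (10):
`Z·(I − A_R)·Zᵀ·(Z·β_R) = Z·(I − A_R)·β_ll`, and consequently for every real `α`,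
`Z·β_R = Z·(I − α·R·(I − A_R))·Zᵀ·(Z·β_R) + α·R·Z·(I − A_R)·β_ll`. -/
theorem largeR_fixed_point_equation
    {N q : ℕ} (hN : 0 < N) (hq : 0 < q)
    (S : Matrix (Fin N) (Fin N) ℝ) (hS : S.PosSemidef)
    (R : ℝ) (hR : 0 < R)
    (Z : Matrix (Fin q) (Fin N) ℝ)
    (hZ1 : (Zᵀ * Z) * (Zᵀ * Z) = Zᵀ * Z)
    (hZ2 : (Z * Zᵀ) * (Z * Zᵀ) = Z * Zᵀ)
    (hSR : (S + R • (1 : Matrix (Fin N) (Fin N) ℝ)).PosDef)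
    (A : Matrix (Fin N) (Fin N) ℝ)
    (hA : A = R • (S + R • (1 : Matrix (Fin N) (Fin N) ℝ))⁻¹)
    (hpen : (S + R • ((1 : Matrix (Fin N) (Fin N) ℝ) - Zᵀ * Z)).PosDef)
    (βll : Fin N → ℝ) (βR : Fin N → ℝ)
    (hβR : βR = ((S + R • ((1 : Matrix (Fin N) (Fin N) ℝ) - Zᵀ * Z))⁻¹ * S).mulVec βll) :
    (Z * ((1 : Matrix (Fin N) (Fin N) ℝ) - A) * Zᵀ).mulVec (Z.mulVec βR) =
        (Z * ((1 : Matrix (Fin N) (Fin N) ℝ) - A)).mulVec βll ∧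
      ∀ α : ℝ,
        Z.mulVec βR =
          (Z * ((1 : Matrix (Fin N) (Fin N) ℝ) -
              (α * R) • ((1 : Matrix (Fin N) (Fin N) ℝ) - A)) * Zᵀ).mulVec
            (Z.mulVec βR) +
            (α * R) • (Z * ((1 : Matrix (Fin N) (Fin N) ℝ) - A)).mulVec βll := by
  set B : Matrix (Fin N) (Fin N) ℝ := S + R • (1 : Matrix (Fin N) (Fin N) ℝ) with hB
  set P : Matrix (Fin N) (Fin N) ℝ := Zᵀ * Z with hP
  set M : Matrix (Fin N) (Fin N) ℝ := S + R • ((1 : Matrix (Fin N) (Fin N) ℝ) - P) with hM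
  have hZP : Z * P = Z := by rw [hP, ← Matrix.mul_assoc]; exact aux_ZZtZ Z hZ2
  have hBu : IsUnit B.det := hSR.det_pos.ne'.isUnit
  have hMu : IsUnit M.det := hpen.det_pos.ne'.isUnit
  have hBinv : B⁻¹ * B = 1 := Matrix.nonsing_inv_mul B hBu
  have hSeq : S = B - R • (1 : Matrix (Fin N) (Fin N) ℝ) := by rw [hB]; abel
  have h1A : (1 : Matrix (Fin N) (Fin N) ℝ) - A = B⁻¹ * S := by
    rw [hA, hSeq, Matrix.mul_sub, hBinv, Matrix.mul_smul, Matrix.mul_one]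
  have hMeq : M = B - R • P := by rw [hM, hB, smul_sub]; abel
  have hMS : M.mulVec βR = S.mulVec βll := by
    rw [hβR, Matrix.mulVec_mulVec, ← Matrix.mul_assoc,
      Matrix.mul_nonsing_inv M hMu, Matrix.one_mul]
  have hkey : Z * ((1 : Matrix (Fin N) (Fin N) ℝ) - A) * Zᵀ * Z = Z * (B⁻¹ * M) := by
    rw [h1A, hSeq, hMeq]
    simp only [Matrix.mul_sub, Matrix.sub_mul, Matrix.mul_smul, Matrix.smul_mul,
      Matrix.mul_one, hBinv, ← Matrix.mul_assoc]
    rw [aux_ZZtZ Z hZ2, Matrix.mul_assoc (Z * B⁻¹) Zᵀ Z, ← hP]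
  have part1 : (Z * ((1 : Matrix (Fin N) (Fin N) ℝ) - A) * Zᵀ).mulVec (Z.mulVec βR) =
      (Z * ((1 : Matrix (Fin N) (Fin N) ℝ) - A)).mulVec βll := by
    rw [Matrix.mulVec_mulVec, hkey, h1A]
    simp only [← Matrix.mulVec_mulVec]
    rw [hMS]
  refine ⟨part1, fun α => ?_⟩
  have hc : Z * ((1 : Matrix (Fin N) (Fin N) ℝ) -
      (α * R) • ((1 : Matrix (Fin N) (Fin N) ℝ) - A)) * Zᵀ =
      Z * Zᵀ - (α * R) • (Z * ((1 : Matrix (Fin N) (Fin N) ℝ) - A) * Zᵀ) := by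
    simp only [Matrix.mul_sub, Matrix.sub_mul, Matrix.mul_smul, Matrix.smul_mul, Matrix.mul_one]
  rw [hc, Matrix.sub_mulVec, Matrix.smul_mulVec, part1,
    Matrix.mulVec_mulVec, aux_ZZtZ Z hZ2]
  abel
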